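/- If c is the center of a sphere S in ℝ^d and Δ_c(a,b) is a triangle cone with apex c (with c not on segment ab), then the intersection Δ_c(a,b) ∩ S is path-connected (it consists of at most one circular arc, possibly degenerate to a point or empty). -/

import Mathlib

/-- The intersection of a triangle cone with apex at the center of a sphere
with that sphere is empty or path-connected (at most one circular arc). -/
theorem triangleCone_inter_sphere_pathConnected {d : ℕ}
    (a b c : EuclideanSpace ℝ (Fin d)) (hc : c ∉ segment ℝ a b)
    (r : ℝ) (hr : 0 < r) :
    ({x : EuclideanSpace ℝ (Fin d) |
        ∃ p ∈ segment ℝ a b, ∃ t : ℝ, 0 ≤ t ∧ x = c + t • (p - c)} ∩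
      Metric.sphere c r) = ∅ ∨
    IsPathConnected
      ({x : EuclideanSpace ℝ (Fin d) |
          ∃ p ∈ segment ℝ a b, ∃ t : ℝ, 0 ≤ t ∧ x = c + t • (p - c)} ∩
        Metric.sphere c r) := by
  right
  have hne : ∀ p ∈ segment ℝ a b, p - c ≠ 0 := by
    intro p hp h
    exact hc (by simpa [sub_eq_zero.mp h] using hp)
  set f : EuclideanSpace ℝ (Fin d) → EuclideanSpace ℝ (Fin d) :=
    fun p => c + (r / ‖p - c‖) • (p - c) with hf
  have hset : ({x : EuclideanSpace ℝ (Fin d) |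
        ∃ p ∈ segment ℝ a b, ∃ t : ℝ, 0 ≤ t ∧ x = c + t • (p - c)} ∩
      Metric.sphere c r) = f '' segment ℝ a b := by
    ext x
    constructor
    · rintro ⟨⟨p, hp, t, ht, rfl⟩, hx⟩
      have hpc : ‖p - c‖ ≠ 0 := norm_ne_zero_iff.mpr (hne p hp)
      have hnorm : t * ‖p - c‖ = r := by
        have : ‖c + t • (p - c) - c‖ = r := by simpa [Metric.mem_sphere] using hx
        simpa [norm_smul, abs_of_nonneg ht] using this
      refine ⟨p, hp, ?_⟩
      have : r / ‖p - c‖ = t := by field_simp [← hnorm]; linear_combination -hnorm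
      simp [hf, this]
    · rintro ⟨p, hp, rfl⟩
      have hpc : ‖p - c‖ ≠ 0 := norm_ne_zero_iff.mpr (hne p hp)
      have hpc' : 0 < ‖p - c‖ := lt_of_le_of_ne (norm_nonneg _) (Ne.symm hpc)
      constructor
      · exact ⟨p, hp, r / ‖p - c‖, le_of_lt (div_pos hr hpc'), rfl⟩
      · simp only [Metric.mem_sphere, hf, dist_eq_norm]
        have : ‖c + (r / ‖p - c‖) • (p - c) - c‖ = ‖(r / ‖p - c‖) • (p - c)‖ := by
          congr 1; abel
        rw [this, norm_smul, Real.norm_eq_abs,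
          abs_of_nonneg (le_of_lt (div_pos hr hpc'))]
        field_simp
    
  rw [hset]
  have hconn : IsPathConnected (segment ℝ a b) :=
    (convex_segment a b).isPathConnected ⟨a, left_mem_segment ℝ a b⟩
  refine hconn.image' ?_
  apply ContinuousOn.add continuousOn_const
  apply ContinuousOn.smul (f := fun p => r / ‖p - c‖) (g := fun p => p - c)
  · exact ContinuousOn.div continuousOn_const
      ((continuous_id.sub continuous_const).norm.continuousOn)
      (fun p hp => norm_ne_zero_iff.mpr (hne p hp))
  · exact (continuous_id.sub continuous_const).continuousOn
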